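/- Let P ∈ K[T] be a nonzero polynomial with P(0) = 0 and write exp(P(T)) = ∑_{n≥0} b_n T^n ∈ K⟦T⟧. Then limsup_{n→∞} ‖b_n‖^{1/n} = sup_{n≥1} ‖b_n‖^{1/n}. (Equivalently: the radius of convergence of exp(P(T)) equals its radius of integrality.) -/

import Mathlib

open Filter

/-- The formal exponential `exp(f)` of a power series `f` (intended for `f` with zero
constant coefficient), defined coefficientwise by
`coeff n (exp f) = ∑_{k=0}^{n} (coeff n of f^k) / k!`. -/
noncomputable def pexp {K : Type*} [Field K] (f : PowerSeries K) : PowerSeries K :=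
  PowerSeries.mk fun n =>
    ∑ k ∈ Finset.range (n + 1), (k.factorial : K)⁻¹ * PowerSeries.coeff n (f ^ k)

section AuxiliaryForStatement3
open Finset PowerSeries
set_option linter.unusedSectionVars false
set_option linter.unnecessarySimpa false
set_option linter.unusedVariables false

section UltraAux
variable {K : Type*} [Field K]

theorem vsum_le {ι : Type*} (v : AbsoluteValue K ℝ)
    (hna : ∀ x y : K, v (x + y) ≤ max (v x) (v y)) (s : Finset ι) (f : ι → K) {C : ℝ} (hC : 0 ≤ C)
    (h : ∀ i ∈ s, v (f i) ≤ C) : v (∑ i ∈ s, f i) ≤ C := by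
  classical
  induction s using Finset.cons_induction with
  | empty => simpa using hC
  | cons a s ha ih =>
    rw [Finset.sum_cons]
    refine le_trans (hna _ _) (max_le (h a (by simp)) (ih fun i hi => h i (by simp [hi])))

theorem vsum_lt {ι : Type*} (v : AbsoluteValue K ℝ)
    (hna : ∀ x y : K, v (x + y) ≤ max (v x) (v y)) (s : Finset ι) (f : ι → K) {C : ℝ} (hC : 0 < C)
    (h : ∀ i ∈ s, v (f i) < C) : v (∑ i ∈ s, f i) < C := by
  classical
  induction s using Finset.cons_induction with
  | empty => simpa using hC
  | cons a s ha ih =>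
    rw [Finset.sum_cons]
    refine lt_of_le_of_lt (hna _ _) (max_lt (h a (by simp)) (ih fun i hi => h i (by simp [hi])))

theorem v_add_eq (v : AbsoluteValue K ℝ)
    (hna : ∀ x y : K, v (x + y) ≤ max (v x) (v y)) {x y : K} (h : v y < v x) :
    v (x + y) = v x := by
  refine le_antisymm (le_trans (hna _ _) (max_le le_rfl h.le)) ?_
  have h2 : v x ≤ max (v (x + y)) (v y) := by
    have := hna (x + y) (-y)
    simpa [v.map_neg] using this
  rcases max_cases (v (x+y)) (v y) with ⟨he, _⟩ | ⟨he, hlt⟩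
  · rw [he] at h2; exact h2
  · rw [he] at h2; exact absurd (lt_of_le_of_lt h2 h) (lt_irrefl _)

theorem vnat_le_one (v : AbsoluteValue K ℝ)
    (hna : ∀ x y : K, v (x + y) ≤ max (v x) (v y)) : ∀ n : ℕ, v (n : K) ≤ 1 := by
  intro n
  induction n with
  | zero => simp
  | succ m ih =>
    push_cast
    refine le_trans (hna _ _) (max_le ih (by simp))

theorem vint_le_one (v : AbsoluteValue K ℝ)
    (hna : ∀ x y : K, v (x + y) ≤ max (v x) (v y)) : ∀ z : ℤ, v (z : K) ≤ 1 := by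
  intro z
  induction z using Int.induction_on with
  | zero => simp
  | succ i ih =>
    have h1 : ((i + 1 : ℤ) : K) = (i : K) + 1 := by push_cast; ring
    rw [h1]
    exact le_trans (hna _ _) (max_le (by exact_mod_cast ih) (by simp))
  | pred i ih =>
    have h1 : ((-i - 1 : ℤ) : K) = ((-i : ℤ) : K) + (-1 : K) := by push_cast; ring
    rw [h1]
    refine le_trans (hna _ _) (max_le (by exact_mod_cast ih) ?_)
    have h2 : v (-1 : K) = v (1 : K) := by simpa using v.map_neg (1 : K)
    simp [h2]
end UltraAux

section PadicAux
variable {K : Type*} [Field K] [CharZero K] {p : ℕ} [Fact p.Prime]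

theorem vnat_coprime (v : AbsoluteValue K ℝ)
    (hna : ∀ x y : K, v (x + y) ≤ max (v x) (v y))
    (hvp : v (p : K) = 1 / (p : ℝ))
    (vint : ∀ z : ℤ, v (z : K) ≤ 1)
    {u : ℕ} (hu : ¬ p ∣ u) : v (u : K) = 1 := by
  have hp : p.Prime := Fact.out
  have hco : Nat.Coprime p u := (Nat.Prime.coprime_iff_not_dvd hp).2 hu
  have hico : IsCoprime (p : ℤ) (u : ℤ) := Int.isCoprime_iff_gcd_eq_one.2 (by
    simpa [Int.gcd_natCast_natCast] using hco)
  obtain ⟨a, b, hab⟩ := hico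
  have h1 : (1 : K) = (a : K) * (p : K) + (b : K) * (u : K) := by
    have := congrArg (fun z : ℤ => (z : K)) hab
    push_cast at this
    exact this.symm
  have hple : (1 : ℝ)/(p : ℝ) < 1 := by
    rw [div_lt_one (by exact_mod_cast hp.pos)]
    exact_mod_cast hp.one_lt
  have hle1 : v (u : K) ≤ 1 := by simpa using vint (u : ℤ)
  rcases lt_or_ge (v (u : K)) 1 with hlt | hge
  · exfalso
    have hv1 : v (1 : K) = 1 := v.map_one
    have : (1 : ℝ) ≤ max (v ((a:K) * (p:K))) (v ((b:K) * (u:K))) := by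
      rw [← hv1]; rw [h1]; exact hna _ _
    have hA : v ((a:K) * (p:K)) < 1 := by
      rw [v.map_mul, hvp]
      calc v (a:K) * (1/(p:ℝ)) ≤ 1 * (1/(p:ℝ)) := by
            apply mul_le_mul_of_nonneg_right (vint a)
            positivity
        _ < 1 := by simpa using hple
    have hB : v ((b:K) * (u:K)) < 1 := by
      rw [v.map_mul]
      calc v (b:K) * v (u:K) ≤ 1 * v (u:K) := by
            apply mul_le_mul_of_nonneg_right (vint b) (v.nonneg _)
        _ < 1 := by simpa using hlt
    rcases max_cases (v ((a:K) * (p:K))) (v ((b:K) * (u:K))) with ⟨he, _⟩ | ⟨he, _⟩ <;>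
      rw [he] at this <;> linarith
  · exact le_antisymm hle1 hge

theorem vfact_inv_le (v : AbsoluteValue K ℝ)
    (hna : ∀ x y : K, v (x + y) ≤ max (v x) (v y))
    (hvp : v (p : K) = 1 / (p : ℝ))
    (vint : ∀ z : ℤ, v (z : K) ≤ 1) (k : ℕ) :
    v (((k.factorial : K))⁻¹) ≤ (p : ℝ)^k := by
  have hp : p.Prime := Fact.out
  have hppos : (0:ℝ) < (p:ℝ) := by exact_mod_cast hp.pos
  set a := padicValNat p (k.factorial) with ha
  set u' := ordCompl[p] k.factorial with hu'
  -- v (k!) = (1/p)^a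
  have h' : p ^ a * u' = k.factorial := by
    have h := Nat.ordProj_mul_ordCompl_eq_self k.factorial p
    rw [hu', ← Nat.factorization_def _ hp, ha] at *
    exact h
  have hfac : (k.factorial : K) = (p : K)^a * ((u' : ℕ) : K) := by
    rw [← h']; push_cast; ring
  have hvu : v ((u' : ℕ) : K) = 1 :=
    vnat_coprime v hna hvp vint (Nat.not_dvd_ordCompl hp (Nat.factorial_ne_zero k))
  have hvfac : v ((k.factorial : K)) = (1/(p:ℝ))^a := by
    rw [hfac, v.map_mul, v.map_pow, hvp, hvu, mul_one]
  -- a ≤ k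
  have hak : a ≤ k := by
    have := sub_one_mul_padicValNat_factorial (p := p) k
    have hp2 : 2 ≤ p := hp.two_le
    have h1 : a ≤ (p-1) * a := Nat.le_mul_of_pos_left a (by omega)
    rw [ha]
    calc padicValNat p k.factorial ≤ (p-1) * padicValNat p (k.factorial) := h1
      _ = k - (p.digits k).sum := this
      _ ≤ k := Nat.sub_le _ _
  have hge : (1/(p:ℝ))^k ≤ v ((k.factorial : K)) := by
    rw [hvfac]
    apply pow_le_pow_of_le_one (by positivity) (by rw [div_le_one hppos]; exact_mod_cast hp.one_le) hak
  have hkne : ((k.factorial : K)) ≠ 0 := by exact_mod_cast (Nat.factorial_ne_zero k)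
  have hvne : v ((k.factorial : K)) > 0 := v.pos hkne
  rw [map_inv₀ v]
  rw [inv_le_comm₀ hvne (by positivity)]
  calc ((p:ℝ)^k)⁻¹ = (1/(p:ℝ))^k := by rw [one_div, inv_pow]
    _ ≤ v ((k.factorial : K)) := hge
end PadicAux


section PexpAux
variable (K : Type*) [Field K] [CharZero K] (A : Type*) [CommRing A] [Algebra K A]

noncomputable def pexpA (f : PowerSeries A) : PowerSeries A :=
  PowerSeries.mk fun n =>
    ∑ k ∈ Finset.range (n + 1),
      algebraMap K A ((k.factorial : K)⁻¹) * PowerSeries.coeff n (f ^ k)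

variable {K A}

theorem coeff_pexpA (f : PowerSeries A) (n : ℕ) :
    PowerSeries.coeff n (pexpA K A f) =
      ∑ k ∈ Finset.range (n + 1),
        algebraMap K A ((k.factorial : K)⁻¹) * PowerSeries.coeff n (f ^ k) := by
  simp [pexpA]

theorem coeff_pow_zero {f : PowerSeries A} (hf : constantCoeff f = 0) {n k : ℕ}
    (h : n < k) : PowerSeries.coeff n (f ^ k) = 0 := by
  have hdvd : (X : PowerSeries A) ^ k ∣ f ^ k :=
    pow_dvd_pow_of_dvd (PowerSeries.X_dvd_iff.2 hf) k
  exact PowerSeries.X_pow_dvd_iff.1 hdvd n h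

theorem coeff_mul_pow_zero {f g : PowerSeries A} (hf : constantCoeff f = 0)
    (hg : constantCoeff g = 0) {n k l : ℕ} (h : n < k + l) :
    PowerSeries.coeff n (f ^ k * g ^ l) = 0 := by
  have hdvd : (X : PowerSeries A) ^ (k + l) ∣ f ^ k * g ^ l := by
    rw [pow_add]
    exact mul_dvd_mul (pow_dvd_pow_of_dvd (PowerSeries.X_dvd_iff.2 hf) k)
      (pow_dvd_pow_of_dvd (PowerSeries.X_dvd_iff.2 hg) l)
  exact PowerSeries.X_pow_dvd_iff.1 hdvd n h

theorem pexpA_zero : pexpA K A 0 = 1 := by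
  ext n
  rw [coeff_pexpA]
  rcases Nat.eq_zero_or_pos n with hn | hn
  · subst hn; simp
  · rw [PowerSeries.coeff_one, if_neg hn.ne']
    apply Finset.sum_eq_zero
    intro k hk
    rcases Nat.eq_zero_or_pos k with hk0 | hk0
    · subst hk0; simp [PowerSeries.coeff_one, hn.ne']
    · rw [zero_pow hk0.ne', map_zero, mul_zero]

theorem cfactK {s k : ℕ} (h : k ≤ s) :
    ((s.factorial : K))⁻¹ * (s.choose k : K) =
      ((k.factorial : K))⁻¹ * (((s - k).factorial : K))⁻¹ := by
  have key : s.choose k * (k.factorial * (s - k).factorial) = s.factorial := by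
    rw [← Nat.choose_mul_factorial_mul_factorial h]; ring
  have h1 : (s.factorial : K) ≠ 0 := by exact_mod_cast s.factorial_ne_zero
  have h2 : (k.factorial : K) ≠ 0 := by exact_mod_cast k.factorial_ne_zero
  have h3 : (((s - k).factorial : K)) ≠ 0 := by exact_mod_cast (s - k).factorial_ne_zero
  field_simp
  exact_mod_cast congrArg (fun m : ℕ => (m : K)) (by rw [mul_assoc]; exact key)

theorem pexpA_add {f g : PowerSeries A} (hf : constantCoeff f = 0)
    (hg : constantCoeff g = 0) :
    pexpA K A (f + g) = pexpA K A f * pexpA K A g := by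
  classical
  ext n
  set c : ℕ → A := fun k => algebraMap K A ((k.factorial : K)⁻¹) with hc
  have hL : PowerSeries.coeff n (pexpA K A (f + g)) =
      ∑ s ∈ Finset.range (n+1), ∑ k ∈ Finset.range (s+1),
        c k * c (s-k) * PowerSeries.coeff n (f ^ k * g ^ (s-k)) := by
    rw [coeff_pexpA]
    apply Finset.sum_congr rfl
    intro s _
    rw [add_pow, map_sum, Finset.mul_sum]
    apply Finset.sum_congr rfl
    intro k hk
    have hks : k ≤ s := Nat.lt_succ_iff.1 (Finset.mem_range.1 hk)
    have hcast : ((s.choose k : ℕ) : PowerSeries A) = C ((s.choose k : ℕ) : A) :=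
      (map_natCast (C (R := A)) (s.choose k)).symm
    rw [hcast, PowerSeries.coeff_mul_C]
    have hscal : c s * ((s.choose k : ℕ) : A) = c k * c (s - k) := by
      have hch : ((s.choose k : ℕ) : A) = algebraMap K A ((s.choose k : ℕ) : K) := by
        rw [map_natCast]
      rw [hc]; dsimp only; rw [hch, ← map_mul, cfactK hks, map_mul]
    calc c s * ((PowerSeries.coeff n) (f ^ k * g ^ (s - k)) * ((s.choose k : ℕ) : A))
        = (c s * ((s.choose k : ℕ) : A)) * (PowerSeries.coeff n) (f ^ k * g ^ (s-k)) := by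
          ring
      _ = c k * c (s - k) * (PowerSeries.coeff n) (f ^ k * g ^ (s - k)) := by rw [hscal]
  have hR : PowerSeries.coeff n (pexpA K A f * pexpA K A g) =
      ∑ k ∈ Finset.range (n+1), ∑ l ∈ Finset.range (n+1),
        c k * c l * PowerSeries.coeff n (f ^ k * g ^ l) := by
    rw [PowerSeries.coeff_mul]
    have hext : ∀ a b : ℕ, a + b = n →
        (PowerSeries.coeff a (pexpA K A f)) * (PowerSeries.coeff b (pexpA K A g)) =
        ∑ k ∈ Finset.range (n+1), ∑ l ∈ Finset.range (n+1),
          c k * c l * (PowerSeries.coeff a (f ^ k) * PowerSeries.coeff b (g ^ l)) := by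
      intro a b hab
      rw [coeff_pexpA, coeff_pexpA]
      rw [show (∑ k ∈ Finset.range (a+1), c k * PowerSeries.coeff a (f^k))
          = ∑ k ∈ Finset.range (n+1), c k * PowerSeries.coeff a (f^k) from
        Finset.sum_subset (Finset.range_subset_range.2 (by omega)) (fun k _ hk => by
          rw [coeff_pow_zero hf (by simp at hk ⊢; omega)]; simp)]
      rw [show (∑ l ∈ Finset.range (b+1), c l * PowerSeries.coeff b (g^l))
          = ∑ l ∈ Finset.range (n+1), c l * PowerSeries.coeff b (g^l) from
        Finset.sum_subset (Finset.range_subset_range.2 (by omega)) (fun l _ hl => by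
          rw [coeff_pow_zero hg (by simp at hl ⊢; omega)]; simp)]
      rw [Finset.sum_mul_sum]
      apply Finset.sum_congr rfl; intro k _; apply Finset.sum_congr rfl; intro l _; ring
    rw [Finset.sum_congr rfl (fun ab hab => hext ab.1 ab.2 (Finset.HasAntidiagonal.mem_antidiagonal.1 hab))]
    rw [Finset.sum_comm]
    apply Finset.sum_congr rfl; intro k _
    rw [Finset.sum_comm]
    apply Finset.sum_congr rfl; intro l _
    rw [PowerSeries.coeff_mul, Finset.mul_sum]
  rw [hL, hR]
  have hres : ∑ k ∈ Finset.range (n+1), ∑ l ∈ Finset.range (n+1),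
      c k * c l * PowerSeries.coeff n (f ^ k * g ^ l)
      = ∑ kl ∈ (Finset.range (n+1) ×ˢ Finset.range (n+1)).filter (fun kl => kl.1 + kl.2 ≤ n),
          c kl.1 * c kl.2 * PowerSeries.coeff n (f ^ kl.1 * g ^ kl.2) := by
    rw [← Finset.sum_product']
    rw [← Finset.sum_filter_add_sum_filter_not
      ((Finset.range (n+1)) ×ˢ (Finset.range (n+1))) (fun kl => kl.1 + kl.2 ≤ n)]
    have hz : ∑ kl ∈ ((Finset.range (n+1)) ×ˢ (Finset.range (n+1))).filter
        (fun kl => ¬ kl.1 + kl.2 ≤ n),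
        c kl.1 * c kl.2 * PowerSeries.coeff n (f ^ kl.1 * g ^ kl.2) = 0 := by
      apply Finset.sum_eq_zero
      intro kl hkl
      simp only [Finset.mem_filter] at hkl
      rw [coeff_mul_pow_zero hf hg (by omega), mul_zero]
    rw [hz, add_zero]
  rw [hres, Finset.sum_sigma']
  apply Finset.sum_nbij' (i := fun sk : Σ _ : ℕ, ℕ => (sk.2, sk.1 - sk.2))
    (j := fun kl : ℕ × ℕ => ⟨kl.1 + kl.2, kl.1⟩)
  · intro a ha
    simp only [Finset.mem_sigma, Finset.mem_range] at ha
    simp only [Finset.mem_filter, Finset.mem_product, Finset.mem_range]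
    omega
  · intro b hb
    simp only [Finset.mem_filter, Finset.mem_product, Finset.mem_range] at hb
    simp only [Finset.mem_sigma, Finset.mem_range]
    omega
  · intro a ha
    simp only [Finset.mem_sigma, Finset.mem_range] at ha
    have : a.2 + (a.1 - a.2) = a.1 := by omega
    exact Sigma.ext (by simpa using this) (by simp)
  · intro b hb
    simp only [Finset.mem_filter, Finset.mem_product, Finset.mem_range] at hb
    simp
  · intro a ha
    rfl

theorem pexpA_prod {ι : Type*} (s : Finset ι) (h : ι → PowerSeries A)
    (hh : ∀ i ∈ s, constantCoeff (h i) = 0) :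
    ∏ i ∈ s, pexpA K A (h i) = pexpA K A (∑ i ∈ s, h i) := by
  classical
  induction s using Finset.cons_induction with
  | empty => simpa using pexpA_zero.symm
  | cons a s ha ih =>
    rw [Finset.prod_cons, Finset.sum_cons, ih (fun i hi => hh i (by simp [hi]))]
    have hsum0 : constantCoeff (∑ i ∈ s, h i) = 0 := by
      rw [map_sum]
      exact Finset.sum_eq_zero (fun i hi => hh i (by simp [hi]))
    rw [pexpA_add (hh a (by simp)) hsum0]

theorem pexpA_rescale (cc : A) (f : PowerSeries A) :
    PowerSeries.rescale cc (pexpA K A f) = pexpA K A (PowerSeries.rescale cc f) := by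
  ext n
  rw [PowerSeries.coeff_rescale, coeff_pexpA, coeff_pexpA, Finset.mul_sum]
  apply Finset.sum_congr rfl
  intro k _
  rw [← map_pow (PowerSeries.rescale cc) f k, PowerSeries.coeff_rescale]
  ring

theorem pexpA_map (f : PowerSeries K) :
    PowerSeries.map (algebraMap K A) (pexpA K K f) =
      pexpA K A (PowerSeries.map (algebraMap K A) f) := by
  ext n
  rw [PowerSeries.coeff_map, coeff_pexpA, coeff_pexpA, map_sum]
  apply Finset.sum_congr rfl
  intro k _
  rw [map_mul, ← map_pow (PowerSeries.map (algebraMap K A)) f k, PowerSeries.coeff_map]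
  rfl

end PexpAux

section CycloAux
variable {K : Type*} [Field K] [CharZero K]

theorem cyclo_main {q : ℕ} (hq : q.Prime) (hq2 : 2 < q)
    (P : Polynomial K) (hP0 : P.coeff 0 = 0) (hdq : P.natDegree < q)
    (b : ℕ → K) (hb : ∀ m, b m = PowerSeries.coeff m (pexpA K K (P : PowerSeries K)))
    (n : ℕ) (hn : 0 < n) :
    ∀ e₁ e₂ : ZMod q,
      (∑ l ∈ (Finset.finsuppAntidiag (Finset.range q) n).filter
          (fun l => ((∑ j ∈ Finset.range q, j * l j : ℕ) : ZMod q) = e₁),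
        ∏ j ∈ Finset.range q, b (l j))
      = (∑ l ∈ (Finset.finsuppAntidiag (Finset.range q) n).filter
          (fun l => ((∑ j ∈ Finset.range q, j * l j : ℕ) : ZMod q) = e₂),
        ∏ j ∈ Finset.range q, b (l j)) := by
  classical
  haveI hfq : Fact q.Prime := ⟨hq⟩
  haveI : NeZero q := ⟨hq.pos.ne'⟩
  haveI : Fact (1 < q) := ⟨hq.one_lt⟩
  set R := AdjoinRoot (Polynomial.cyclotomic q K) with hR
  set ω : R := AdjoinRoot.root _ with hω
  set aM : K →+* R := algebraMap K R with haM
  -- basic facts about ω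
  have hω0 : ∑ i ∈ Finset.range q, ω ^ i = 0 := by
    have h1 : Polynomial.eval₂ (AdjoinRoot.of (Polynomial.cyclotomic q K)) ω
        (∑ i ∈ Finset.range q, Polynomial.X ^ i) = 0 := by
      rw [← Polynomial.cyclotomic_prime K q]
      exact AdjoinRoot.eval₂_root _
    rw [Polynomial.eval₂_finset_sum] at h1
    simpa using h1
  have hωq : ω ^ q = 1 := by
    have h2 := geom_sum_mul ω q
    rw [hω0, zero_mul] at h2
    have := sub_eq_zero.1 h2.symm
    exact this
  have hωmod : ∀ a : ℕ, ω ^ a = ω ^ (a % q) := by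
    intro a
    conv_lhs => rw [← Nat.div_add_mod a q]
    rw [pow_add, pow_mul, hωq, one_pow, one_mul]
  -- sum of ω^(j*i) vanishes for 0 < i < q
  have hWsum : ∀ i : ℕ, 0 < i → i < q → ∑ j ∈ Finset.range q, ω ^ (j * i) = 0 := by
    intro i hi0 hiq
    have hidvd : ¬ q ∣ i := fun hd => absurd (Nat.le_of_dvd hi0 hd) (not_le.2 hiq)
    have hizm : (i : ZMod q) ≠ 0 := by
      rw [Ne, ZMod.natCast_eq_zero_iff]
      exact hidvd
    set iv : ℕ := ((i : ZMod q)⁻¹).val with hiv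
    have hmul1 : (i * iv) % q = 1 := by
      have h3 : ((i * iv : ℕ) : ZMod q) = 1 := by
        push_cast [hiv]
        rw [ZMod.natCast_rightInverse ((i : ZMod q)⁻¹)]
        exact mul_inv_cancel₀ hizm
      have h4 := ZMod.val_natCast (n := q) (i * iv)
      rw [h3, ZMod.val_one] at h4
      omega
    have key : ∑ j ∈ Finset.range q, ω ^ (j * i) = ∑ j ∈ Finset.range q, ω ^ j := by
      rw [show (∑ j ∈ Finset.range q, ω ^ (j * i))
          = ∑ j ∈ Finset.range q, ω ^ ((j * i) % q) from
        Finset.sum_congr rfl (fun j _ => hωmod _)]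
      apply Finset.sum_nbij' (i := fun j => (j * i) % q) (j := fun j => (j * iv) % q)
      · intro a _; simp [Finset.mem_range, Nat.mod_lt _ hq.pos]
      · intro a _; simp [Finset.mem_range, Nat.mod_lt _ hq.pos]
      · intro a ha
        simp only [Finset.mem_range] at ha
        rw [Nat.mod_mul_mod, mul_assoc, Nat.mul_mod, hmul1, mul_one, Nat.mod_mod_of_dvd,
          Nat.mod_eq_of_lt ha]
        exact dvd_rfl
      · intro a ha
        simp only [Finset.mem_range] at ha
        rw [Nat.mod_mul_mod, mul_assoc, Nat.mul_mod (a := a) (b := iv * i), mul_comm iv i,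
          hmul1, mul_one, Nat.mod_mod_of_dvd, Nat.mod_eq_of_lt ha]
        exact dvd_rfl
      · intro a _; rfl
    rw [key, hω0]
  -- the product identity
  set FR : PowerSeries R := PowerSeries.map aM (pexpA K K (P : PowerSeries K)) with hFR
  set PR : PowerSeries R := PowerSeries.map aM (P : PowerSeries K) with hPR
  have hPR0 : PowerSeries.constantCoeff PR = 0 := by
    rw [hPR, ← PowerSeries.coeff_zero_eq_constantCoeff_apply, PowerSeries.coeff_map,
      Polynomial.coeff_coe, hP0, map_zero]
  have hprod : ∏ j ∈ Finset.range q, PowerSeries.rescale (ω ^ j) FR = 1 := by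
    have h1 : FR = pexpA K R PR := by rw [hFR, hPR, pexpA_map]
    have h2 : ∀ j, PowerSeries.rescale (ω ^ j) FR
        = pexpA K R (PowerSeries.rescale (ω ^ j) PR) := by
      intro j; rw [h1, pexpA_rescale]
    rw [Finset.prod_congr rfl (fun j _ => h2 j)]
    rw [pexpA_prod _ _ (fun j _ => by
      rw [← PowerSeries.coeff_zero_eq_constantCoeff_apply, PowerSeries.coeff_rescale,
        pow_zero, one_mul, PowerSeries.coeff_zero_eq_constantCoeff_apply, hPR0])]
    have h3 : ∑ j ∈ Finset.range q, PowerSeries.rescale (ω ^ j) PR = 0 := by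
      ext i
      rw [map_sum, map_zero]
      have h7 : ∀ j, PowerSeries.coeff i (PowerSeries.rescale (ω^j) PR)
          = ω ^ (j*i) * aM (P.coeff i) := by
        intro j
        rw [PowerSeries.coeff_rescale, hPR, PowerSeries.coeff_map, Polynomial.coeff_coe,
          ← pow_mul]
      rw [Finset.sum_congr rfl (fun j _ => h7 j), ← Finset.sum_mul]
      rcases Nat.eq_zero_or_pos i with hi0 | hi0
      · subst hi0; rw [hP0, map_zero, mul_zero]
      · rcases eq_or_ne (P.coeff i) 0 with hc | hc
        · rw [hc, map_zero, mul_zero]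
        · have hiq : i < q := lt_of_le_of_lt (Polynomial.le_natDegree_of_ne_zero hc) hdq
          rw [hWsum i hi0 hiq, zero_mul]
    rw [h3, pexpA_zero]
  -- coefficient extraction at degree n
  have hcoeffn : (PowerSeries.coeff n)
      (∏ j ∈ Finset.range q, PowerSeries.rescale (ω ^ j) FR) = 0 := by
    rw [hprod, PowerSeries.coeff_one, if_neg hn.ne']
  rw [PowerSeries.coeff_prod] at hcoeffn
  have hterm : ∀ l : ℕ →₀ ℕ,
      (∏ j ∈ Finset.range q, PowerSeries.coeff (l j) (PowerSeries.rescale (ω ^ j) FR))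
      = aM (∏ j ∈ Finset.range q, b (l j))
        * ω ^ (((∑ j ∈ Finset.range q, j * l j : ℕ) : ZMod q)).val := by
    intro l
    have h4 : ∀ j, PowerSeries.coeff (l j) (PowerSeries.rescale (ω ^ j) FR)
        = ω ^ (j * l j) * aM (b (l j)) := by
      intro j
      rw [PowerSeries.coeff_rescale, hFR, PowerSeries.coeff_map, ← hb (l j), ← pow_mul]
    rw [Finset.prod_congr rfl (fun j _ => h4 j), Finset.prod_mul_distrib, ← map_prod aM,
      Finset.prod_pow_eq_pow_sum, mul_comm]
    congr 1
    rw [hωmod (∑ j ∈ Finset.range q, j * l j), ZMod.val_natCast]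
  rw [Finset.sum_congr rfl (fun l _ => hterm l)] at hcoeffn
  -- fiberwise grouping
  set S : ZMod q → K := fun e => ∑ l ∈ (Finset.finsuppAntidiag (Finset.range q) n).filter
      (fun l => ((∑ j ∈ Finset.range q, j * l j : ℕ) : ZMod q) = e),
      ∏ j ∈ Finset.range q, b (l j) with hS
  have hfib : ∑ e : ZMod q, aM (S e) * ω ^ e.val = 0 := by
    rw [← hcoeffn]
    rw [← Finset.sum_fiberwise (Finset.finsuppAntidiag (Finset.range q) n)
      (fun l => ((∑ j ∈ Finset.range q, j * l j : ℕ) : ZMod q))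
      (fun l => aM (∏ j ∈ Finset.range q, b (l j))
        * ω ^ (((∑ j ∈ Finset.range q, j * l j : ℕ) : ZMod q)).val)]
    apply Finset.sum_congr rfl
    intro e _
    rw [hS]
    dsimp only
    rw [map_sum, Finset.sum_mul]
    apply Finset.sum_congr rfl
    intro l hl
    rw [(Finset.mem_filter.1 hl).2]
  -- to a sum over range q
  have hrange : ∑ i ∈ Finset.range q, aM (S ((i : ℕ) : ZMod q)) * ω ^ i = 0 := by
    rw [← hfib]
    apply Finset.sum_nbij' (i := fun i : ℕ => ((i : ℕ) : ZMod q)) (j := fun e : ZMod q => e.val)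
    · intro a _; exact Finset.mem_univ _
    · intro e _; simp [Finset.mem_range, ZMod.val_lt]
    · intro a ha; simp only [Finset.mem_range] at ha; exact ZMod.val_cast_of_lt ha
    · intro e _; exact ZMod.natCast_rightInverse e
    · intro a ha
      simp only [Finset.mem_range] at ha
      rw [ZMod.val_cast_of_lt ha]
  -- split off the top term
  have hq1 : q - 1 + 1 = q := by omega
  have hsplit : (∑ i ∈ Finset.range (q-1), aM (S ((i : ℕ) : ZMod q)) * ω ^ i)
      + aM (S (((q-1 : ℕ)) : ZMod q)) * ω ^ (q-1) = 0 := by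
    have h5 := Finset.sum_range_succ (fun i : ℕ => aM (S ((i : ℕ) : ZMod q)) * ω ^ i) (q-1)
    rw [hq1] at h5
    rw [← h5]
    exact hrange
  have hsplitω : (∑ i ∈ Finset.range (q-1), ω ^ i) + ω ^ (q-1) = 0 := by
    have h6 := Finset.sum_range_succ (fun i : ℕ => ω ^ i) (q-1)
    rw [hq1] at h6
    rw [← h6]
    exact hω0
  have hlin : ∑ i ∈ Finset.range (q-1),
      aM (S ((i : ℕ) : ZMod q) - S (((q-1:ℕ)) : ZMod q)) * ω ^ i = 0 := by
    have : ∀ i, aM (S ((i : ℕ) : ZMod q) - S (((q-1:ℕ)) : ZMod q)) * ω ^ i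
        = aM (S ((i : ℕ) : ZMod q)) * ω ^ i - aM (S (((q-1:ℕ)) : ZMod q)) * ω ^ i := by
      intro i; rw [map_sub]; ring
    rw [Finset.sum_congr rfl (fun i _ => this i), Finset.sum_sub_distrib, ← Finset.mul_sum]
    linear_combination hsplit - aM (S (((q-1:ℕ)) : ZMod q)) * hsplitω
  -- linear independence via the power basis
  have hmon : (Polynomial.cyclotomic q K).Monic := Polynomial.cyclotomic.monic q K
  set pb : PowerBasis K R := AdjoinRoot.powerBasis' hmon with hpb
  have hdim : pb.dim = q - 1 := by
    rw [hpb, AdjoinRoot.powerBasis'_dim, Polynomial.natDegree_cyclotomic, Nat.totient_prime hq]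
  have hgen : pb.gen = ω := by rw [hpb, AdjoinRoot.powerBasis'_gen]
  have hzero : ∀ i : ℕ, i < q - 1 → S ((i : ℕ) : ZMod q) = S (((q-1:ℕ)) : ZMod q) := by
    have hsum0 : ∑ i : Fin pb.dim,
        (S (((i : ℕ)) : ZMod q) - S (((q-1:ℕ)) : ZMod q)) • pb.basis i = 0 := by
      have hcv : ∀ i : Fin pb.dim,
          (S (((i : ℕ)) : ZMod q) - S (((q-1:ℕ)) : ZMod q)) • pb.basis i
          = aM (S (((i : ℕ)) : ZMod q) - S (((q-1:ℕ)) : ZMod q)) * ω ^ (i : ℕ) := by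
        intro i
        rw [pb.basis_eq_pow i, hgen, Algebra.smul_def, haM]
      rw [Finset.sum_congr rfl (fun i _ => hcv i)]
      rw [Fin.sum_univ_eq_sum_range
        (fun i => aM (S ((i : ℕ) : ZMod q) - S (((q-1:ℕ)) : ZMod q)) * ω ^ i) pb.dim]
      rw [hdim]
      exact hlin
    have hz := Fintype.linearIndependent_iff.1 pb.basis.linearIndependent
      (fun i : Fin pb.dim => S (((i : ℕ)) : ZMod q) - S (((q-1:ℕ)) : ZMod q)) hsum0
    intro i hi
    have hi' : i < pb.dim := by rw [hdim]; exact hi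
    have h8 := hz ⟨i, hi'⟩
    exact sub_eq_zero.1 h8
  intro e₁ e₂
  have hall : ∀ e : ZMod q, S e = S (((q-1:ℕ)) : ZMod q) := by
    intro e
    have he : e = ((e.val : ℕ) : ZMod q) := (ZMod.natCast_rightInverse e).symm
    rcases lt_or_ge e.val (q-1) with hlt | hge
    · rw [he]; exact hzero e.val hlt
    · have : e.val = q - 1 := le_antisymm (by have := ZMod.val_lt e; omega) hge
      rw [he, this]
  rw [show (∑ l ∈ (Finset.finsuppAntidiag (Finset.range q) n).filter
      (fun l => ((∑ j ∈ Finset.range q, j * l j : ℕ) : ZMod q) = e₁),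
      ∏ j ∈ Finset.range q, b (l j)) = S e₁ from rfl]
  rw [show (∑ l ∈ (Finset.finsuppAntidiag (Finset.range q) n).filter
      (fun l => ((∑ j ∈ Finset.range q, j * l j : ℕ) : ZMod q) = e₂),
      ∏ j ∈ Finset.range q, b (l j)) = S e₂ from rfl]
  rw [hall e₁, hall e₂]
end CycloAux

section BoundAux
variable {K : Type*} [Field K] [CharZero K] {p : ℕ} [Fact p.Prime]

theorem bound_lemma (v : AbsoluteValue K ℝ)
    (hna : ∀ x y : K, v (x + y) ≤ max (v x) (v y))
    (hvp : v (p : K) = 1 / (p : ℝ))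
    (P : Polynomial K)
    (b : ℕ → K) (hbA : ∀ n, b n = PowerSeries.coeff n (pexpA K K (P : PowerSeries K))) :
    ∃ M : ℝ, 1 ≤ M ∧ ∀ n : ℕ, 1 ≤ n → v (b n) ≤ M ^ n := by
  classical
  have vint := vint_le_one v hna
  set C : ℝ := 1 + ∑ i ∈ Finset.range (P.natDegree + 1), v (P.coeff i) with hC
  have hsum_nonneg : 0 ≤ ∑ i ∈ Finset.range (P.natDegree + 1), v (P.coeff i) :=
    Finset.sum_nonneg (fun i _ => v.nonneg _)
  have hC1 : 1 ≤ C := by rw [hC]; linarith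
  have hC0 : 0 ≤ C := by linarith
  have hvc : ∀ i : ℕ, v (P.coeff i) ≤ C := by
    intro i
    rcases le_or_gt i P.natDegree with hi | hi
    · have h1 : v (P.coeff i) ≤ ∑ i ∈ Finset.range (P.natDegree + 1), v (P.coeff i) :=
        Finset.single_le_sum (fun i _ => v.nonneg _) (Finset.mem_range.2 (by omega))
      rw [hC]; linarith
    · rw [Polynomial.coeff_eq_zero_of_natDegree_lt hi, v.map_zero]; linarith
  have hpow : ∀ k n : ℕ, v (PowerSeries.coeff n ((P : PowerSeries K) ^ k)) ≤ C ^ k := by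
    intro k
    induction k with
    | zero =>
      intro n
      rw [pow_zero, pow_zero, PowerSeries.coeff_one]
      split
      · simp
      · simp
    | succ k ih =>
      intro n
      rw [pow_succ, PowerSeries.coeff_mul]
      apply vsum_le v hna _ _ (by positivity)
      intro ab _
      rw [v.map_mul]
      calc v (PowerSeries.coeff ab.1 ((P : PowerSeries K) ^ k))
            * v (PowerSeries.coeff ab.2 (P : PowerSeries K))
          ≤ C ^ k * C := by
            apply mul_le_mul (ih ab.1) ?_ (v.nonneg _) (by positivity)
            rw [Polynomial.coeff_coe]
            exact hvc ab.2
        _ = C ^ (k+1) := by rw [pow_succ]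
  refine ⟨(p : ℝ) * C, ?_, ?_⟩
  · have hp2 : (2 : ℝ) ≤ (p : ℝ) := by exact_mod_cast (Fact.out : p.Prime).two_le
    nlinarith
  · intro n hn
    have hp2 : (2 : ℝ) ≤ (p : ℝ) := by exact_mod_cast (Fact.out : p.Prime).two_le
    have hM1 : (1:ℝ) ≤ (p : ℝ) * C := by nlinarith
    rw [hbA n, coeff_pexpA]
    apply vsum_le v hna _ _ (by positivity)
    intro k hk
    have hkn : k ≤ n := by simp at hk; omega
    rw [v.map_mul]
    have h2 : v ((algebraMap K K) ((k.factorial : K))⁻¹) ≤ (p:ℝ)^k := by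
      rw [show (algebraMap K K) ((k.factorial : K))⁻¹ = ((k.factorial : K))⁻¹ from rfl]
      exact vfact_inv_le v hna hvp vint k
    calc v ((algebraMap K K) ((k.factorial : K))⁻¹)
          * v (PowerSeries.coeff n ((P : PowerSeries K) ^ k))
        ≤ (p:ℝ)^k * C^k := mul_le_mul h2 (hpow k n) (v.nonneg _) (by positivity)
      _ = ((p:ℝ) * C)^k := by rw [mul_pow]
      _ ≤ ((p:ℝ) * C)^n := pow_le_pow_right₀ hM1 hkn
end BoundAux

section KeyAux
variable {K : Type*} [Field K] [CharZero K]

theorem key_lemma (v : AbsoluteValue K ℝ)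
    (hna : ∀ x y : K, v (x + y) ≤ max (v x) (v y))
    (P : Polynomial K) (hP0 : P.coeff 0 = 0)
    (b : ℕ → K) (hbA : ∀ n, b n = PowerSeries.coeff n (pexpA K K (P : PowerSeries K)))
    (hb0 : b 0 = 1)
    (hbd : Filter.IsBoundedUnder (· ≤ ·) Filter.atTop (fun n : ℕ => v (b n) ^ (1 / (n:ℝ))))
    (N : ℕ) (hN : 1 ≤ N) :
    v (b N) ^ (1/(N:ℝ)) ≤ Filter.limsup (fun n : ℕ => v (b n) ^ (1/(n:ℝ))) Filter.atTop := by
  classical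
  set u : ℕ → ℝ := fun n => v (b n) with hu
  set W : ℕ → ℝ := fun n : ℕ => v (b n) ^ (1/(n:ℝ)) with hW
  set L : ℝ := Filter.limsup W Filter.atTop with hL
  by_contra hcon
  push_neg at hcon
  -- basic nonnegativity
  have hWnn : ∀ n, 0 ≤ W n := fun n => Real.rpow_nonneg (v.nonneg _) _
  have hunn : ∀ n, 0 ≤ u n := fun n => v.nonneg _
  have hL0 : 0 ≤ L :=
    Filter.le_limsup_of_frequently_le (Filter.Frequently.of_forall hWnn) hbd
  -- the W ^ n = u identity
  have hWn : ∀ n : ℕ, 1 ≤ n → (W n) ^ (n:ℕ) = u n := by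
    intro n hn
    have hn0 : (n:ℝ) ≠ 0 := Nat.cast_ne_zero.2 (by omega)
    rw [hW, hu]
    dsimp only
    rw [← Real.rpow_natCast (v (b n) ^ (1/(n:ℝ))) n, ← Real.rpow_mul (v.nonneg _), one_div,
      inv_mul_cancel₀ hn0, Real.rpow_one]
  set α : ℝ := W N with hα
  have hLα : L < α := hcon
  set β : ℝ := (L + α)/2 with hβ
  set γ : ℝ := (L + β)/2 with hγ
  have hαpos : 0 < α := lt_of_le_of_lt hL0 hLα
  have hLγ : L < γ := by rw [hγ, hβ]; linarith
  have hγβ : γ < β := by rw [hγ, hβ]; linarith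
  have hβα : β < α := by rw [hβ]; linarith
  have hβpos : 0 < β := by rw [hβ]; linarith
  have hγnn : 0 ≤ γ := by rw [hγ, hβ]; linarith
  set r : ℝ := β⁻¹ with hr
  have hrpos : 0 < r := by rw [hr]; positivity
  set g : ℕ → ℝ := fun n => u n * r ^ n with hg
  have hgnn : ∀ n, 0 ≤ g n := fun n => mul_nonneg (hunn n) (by positivity)
  have hg0 : g 0 = 1 := by
    rw [hg]; dsimp only; rw [hu]; dsimp only; rw [hb0, v.map_one, pow_zero, mul_one]
  have hgN : 1 < g N := by
    have huN : u N = α ^ (N:ℕ) := (hWn N hN).symm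
    rw [hg]; dsimp only
    rw [huN, ← mul_pow]
    apply one_lt_pow₀
    · rw [hr, ← div_eq_mul_inv, lt_div_iff₀ hβpos, one_mul]; exact hβα
    · omega
  -- eventually g n < g N
  have hev : ∀ᶠ n in Filter.atTop, W n < γ :=
    Filter.eventually_lt_of_limsup_lt (by rw [← hL]; exact hLγ) hbd
  have htend : Filter.Tendsto (fun n : ℕ => (γ * r) ^ n) Filter.atTop (nhds 0) := by
    apply tendsto_pow_atTop_nhds_zero_of_lt_one (by positivity)
    rw [hr, ← div_eq_mul_inv, div_lt_one hβpos]; exact hγβ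
  have hev2 : ∀ᶠ n : ℕ in Filter.atTop, (γ * r) ^ n < 1 :=
    htend.eventually_lt_const (by norm_num)
  have hgsmall : ∀ᶠ n in Filter.atTop, g n < g N := by
    filter_upwards [hev, hev2, Filter.eventually_ge_atTop 1] with n h1 h2 h3
    have hun : u n ≤ γ ^ n := by
      rw [← hWn n h3]
      exact pow_le_pow_left₀ (hWnn n) h1.le n
    have : g n ≤ (γ * r) ^ n := by
      rw [hg]; dsimp only
      rw [mul_pow]
      exact mul_le_mul_of_nonneg_right hun (by positivity)
    calc g n ≤ (γ * r)^n := this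
      _ < 1 := h2
      _ < g N := hgN
  obtain ⟨m₀, hm₀⟩ := Filter.eventually_atTop.1 hgsmall
  set m : ℕ := max m₀ N with hm
  have hmN : N ≤ m := le_max_right _ _
  have hmlt : ∀ n, m < n → g n < g N := fun n hn => hm₀ n (by omega)
  have hne : (Finset.range (m+1)).Nonempty := ⟨0, Finset.mem_range.2 (by omega)⟩
  set G : ℝ := (Finset.range (m+1)).sup' hne g with hG
  have hGg : ∀ n, g n ≤ G := by
    intro n
    rcases le_or_gt n m with h | h
    · exact Finset.le_sup' g (Finset.mem_range.2 (by omega))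
    · exact le_trans (hmlt n h).le (Finset.le_sup' g (Finset.mem_range.2 (by omega)))
  have hG1 : 1 < G := lt_of_lt_of_le hgN (hGg N)
  have hGpos : 0 < G := by linarith
  obtain ⟨N₀, hN₀mem, hN₀⟩ := Finset.exists_mem_eq_sup' hne g
  set T : Finset ℕ := (Finset.range (m+1)).filter (fun k => g k = G) with hT
  have hTne : T.Nonempty := ⟨N₀, Finset.mem_filter.2 ⟨hN₀mem, hN₀.symm⟩⟩
  set Nstar : ℕ := T.max' hTne with hNs
  have hNsT : Nstar ∈ T := Finset.max'_mem T hTne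
  have hgNs : g Nstar = G := (Finset.mem_filter.1 hNsT).2
  have hup : ∀ k, g k = G → k ≤ Nstar := by
    intro k hk
    rcases le_or_gt k m with h | h
    · exact Finset.le_max' T k (Finset.mem_filter.2 ⟨Finset.mem_range.2 (by omega), hk⟩)
    · exfalso
      have := hmlt k h
      have hNG : g N ≤ G := hGg N
      linarith [hk]
  have hNspos : 1 ≤ Nstar := by
    by_contra hbad
    have h0 : Nstar = 0 := by omega
    rw [h0, hg0] at hgNs
    linarith
  have huNs : 0 < u Nstar := by
    by_contra hbad
    push_neg at hbad
    have h0 : u Nstar = 0 := le_antisymm hbad (hunn Nstar)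
    rw [hg] at hgNs; dsimp only at hgNs
    rw [h0, zero_mul] at hgNs
    linarith
  -- choose the prime q
  obtain ⟨q, hqge, hq⟩ := Nat.exists_infinite_primes (max P.natDegree 2 + 1)
  have hq2 : 2 < q := by omega
  have hdq : P.natDegree < q := by omega
  haveI hfq : Fact q.Prime := ⟨hq⟩
  haveI : NeZero q := ⟨hq.pos.ne'⟩
  haveI : Fact (1 < q) := ⟨hq.one_lt⟩
  set n : ℕ := q * Nstar with hn
  have hnpos : 0 < n := by
    rw [hn]; exact Nat.mul_pos hq.pos (by omega)
  set B : ℝ := u Nstar ^ q with hB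
  have hBpos : 0 < B := by rw [hB]; positivity
  -- the constant tuple
  set lc : ℕ →₀ ℕ := Finsupp.onFinset (Finset.range q) (fun j => if j < q then Nstar else 0)
    (fun j hj => Finset.mem_range.2 (by
      by_contra hq'
      exact hj (if_neg hq'))) with hlc
  have hlcj : ∀ j ∈ Finset.range q, lc j = Nstar := by
    intro j hj
    simp [hlc, Finset.mem_range.1 hj]
  have hlc_mem : lc ∈ Finset.finsuppAntidiag (Finset.range q) n := by
    rw [Finset.mem_finsuppAntidiag]
    constructor
    · rw [Finset.sum_congr rfl hlcj, Finset.sum_const, Finset.card_range, smul_eq_mul]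
    · exact Finsupp.support_onFinset_subset
  -- weight of the constant tuple
  have hsumid : ((∑ j ∈ Finset.range q, j : ℕ) : ZMod q) = 0 := by
    have h2 := Finset.sum_range_id_mul_two q
    have h3 : (((∑ j ∈ Finset.range q, j) * 2 : ℕ) : ZMod q) = ((q * (q-1) : ℕ) : ZMod q) := by
      rw [h2]
    rw [Nat.cast_mul, Nat.cast_mul, ZMod.natCast_self, zero_mul] at h3
    have h4 : ((2:ℕ) : ZMod q) ≠ 0 := by
      rw [Ne, ZMod.natCast_eq_zero_iff]
      intro hdvd
      have := Nat.le_of_dvd (by norm_num) hdvd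
      omega
    rcases mul_eq_zero.1 h3 with h | h
    · exact h
    · exact absurd h h4
  have hwlc : ((∑ j ∈ Finset.range q, j * lc j : ℕ) : ZMod q) = 0 := by
    have h5 : (∑ j ∈ Finset.range q, j * lc j) = (∑ j ∈ Finset.range q, j) * Nstar := by
      rw [Finset.sum_mul]
      apply Finset.sum_congr rfl
      intro j hj
      rw [hlcj j hj]
    rw [h5, Nat.cast_mul, hsumid, zero_mul]
  -- value of the constant tuple
  have hvlc : v (∏ j ∈ Finset.range q, b (lc j)) = B := by
    rw [Finset.prod_congr rfl (fun j hj => by rw [hlcj j hj] : ∀ j ∈ Finset.range q, b (lc j) = b Nstar)]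
    rw [Finset.prod_const, Finset.card_range, v.map_pow, hB, hu]
  -- the main strict bound for non-constant tuples
  have hmain : ∀ l : ℕ →₀ ℕ, l ∈ Finset.finsuppAntidiag (Finset.range q) n → l ≠ lc →
      v (∏ j ∈ Finset.range q, b (l j)) < B := by
    intro l hl hlne
    obtain ⟨hsum_l, hsupp_l⟩ := Finset.mem_finsuppAntidiag.1 hl
    have hvprod : v (∏ j ∈ Finset.range q, b (l j)) = ∏ j ∈ Finset.range q, u (l j) :=
      map_prod v _ _
    -- find an index where g < G
    have hex : ∃ j0 ∈ Finset.range q, g (l j0) < G := by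
      by_contra hbad
      push_neg at hbad
      have hall : ∀ j ∈ Finset.range q, l j = Nstar := by
        by_contra hbad2
        push_neg at hbad2
        obtain ⟨j1, hj1, hne1⟩ := hbad2
        have hlt : ∀ j ∈ Finset.range q, l j ≤ Nstar := by
          intro j hj
          exact hup (l j) (le_antisymm (hGg _) (hbad j hj))
        have : ∑ j ∈ Finset.range q, l j < ∑ j ∈ Finset.range q, Nstar :=
          Finset.sum_lt_sum hlt ⟨j1, hj1, lt_of_le_of_ne (hlt j1 hj1) hne1⟩
        rw [hsum_l, Finset.sum_const, Finset.card_range, smul_eq_mul] at this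
        omega
      apply hlne
      apply Finsupp.ext
      intro a
      rcases lt_or_ge a q with ha | ha
      · rw [hall a (Finset.mem_range.2 ha), hlcj a (Finset.mem_range.2 ha)]
      · have h6 : l a = 0 := by
          by_contra h7
          have := hsupp_l (Finsupp.mem_support_iff.2 h7)
          simp only [Finset.mem_range] at this
          omega
        have h8 : lc a = 0 := by
          simp only [hlc, Finsupp.onFinset_apply]
          rw [if_neg (by omega)]
        rw [h6, h8]
    obtain ⟨j0, hj0, hj0lt⟩ := hex
    -- product of g-values is < G^q
    have hprodg : ∏ j ∈ Finset.range q, g (l j) < G ^ q := by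
      rw [← Finset.mul_prod_erase _ _ hj0]
      have herase : ∏ j ∈ (Finset.range q).erase j0, g (l j) ≤ G ^ (q - 1) := by
        calc ∏ j ∈ (Finset.range q).erase j0, g (l j)
            ≤ ∏ j ∈ (Finset.range q).erase j0, G :=
              Finset.prod_le_prod (fun j _ => hgnn _) (fun j _ => hGg _)
          _ = G ^ (q-1) := by
              rw [Finset.prod_const, Finset.card_erase_of_mem hj0, Finset.card_range]
      calc g (l j0) * ∏ j ∈ (Finset.range q).erase j0, g (l j)
          ≤ g (l j0) * G ^ (q-1) := mul_le_mul_of_nonneg_left herase (hgnn _)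
        _ < G * G ^ (q-1) := mul_lt_mul_of_pos_right hj0lt (by positivity)
        _ = G ^ q := by rw [← pow_succ']; congr 1; omega
    -- convert to u-values
    have hglu : ∏ j ∈ Finset.range q, g (l j)
        = (∏ j ∈ Finset.range q, u (l j)) * r ^ n := by
      rw [hg]
      dsimp only
      rw [Finset.prod_mul_distrib, Finset.prod_pow_eq_pow_sum, hsum_l]
    have hGq : G ^ q = B * r ^ n := by
      rw [← hgNs, hg]
      dsimp only
      rw [mul_pow, ← pow_mul, hB, hn, Nat.mul_comm]
    rw [hvprod]
    have h9 : (∏ j ∈ Finset.range q, u (l j)) * r ^ n < B * r ^ n := by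
      rw [← hglu, ← hGq]; exact hprodg
    exact lt_of_mul_lt_mul_right h9 (le_of_lt (pow_pos hrpos n))
  -- compare the two fiber sums
  have hSeq := cyclo_main hq hq2 P hP0 hdq b hbA n hnpos (0 : ZMod q) (1 : ZMod q)
  set T0 := (Finset.finsuppAntidiag (Finset.range q) n).filter
      (fun l => ((∑ j ∈ Finset.range q, j * l j : ℕ) : ZMod q) = (0 : ZMod q)) with hT0
  set T1 := (Finset.finsuppAntidiag (Finset.range q) n).filter
      (fun l => ((∑ j ∈ Finset.range q, j * l j : ℕ) : ZMod q) = (1 : ZMod q)) with hT1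
  have hlcT0 : lc ∈ T0 := Finset.mem_filter.2 ⟨hlc_mem, hwlc⟩
  have hrest : v (∑ l ∈ T0.erase lc, ∏ j ∈ Finset.range q, b (l j))
      < v (∏ j ∈ Finset.range q, b (lc j)) := by
    rw [hvlc]
    apply vsum_lt v hna _ _ hBpos
    intro l hl
    have hl' := Finset.mem_erase.1 hl
    exact hmain l (Finset.mem_filter.1 hl'.2).1 hl'.1
  have hv0 : v (∑ l ∈ T0, ∏ j ∈ Finset.range q, b (l j)) = B := by
    rw [← Finset.add_sum_erase T0 _ hlcT0, v_add_eq v hna hrest, hvlc]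
  have hv1 : v (∑ l ∈ T1, ∏ j ∈ Finset.range q, b (l j)) < B := by
    apply vsum_lt v hna _ _ hBpos
    intro l hl
    have hl' := Finset.mem_filter.1 hl
    apply hmain l hl'.1
    intro hleq
    rw [hleq, hwlc] at hl'
    exact zero_ne_one hl'.2
  rw [hSeq] at hv0
  linarith [hv0, hv1]
end KeyAux
section Final
variable {K : Type*} [Field K] [CharZero K]

theorem pexp_eq_pexpA (f : PowerSeries K) : pexp f = pexpA K K f := by
  ext n
  simp [pexp, pexpA]

theorem coeff_zero_pexpA (f : PowerSeries K) :
    PowerSeries.coeff 0 (pexpA K K f) = 1 := by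
  rw [coeff_pexpA]
  simp

end Final

end AuxiliaryForStatement3

open Finset PowerSeries in
theorem statement_3 (p : ℕ) [Fact p.Prime] (K : Type*) [Field K] [CharZero K]
    (v : AbsoluteValue K ℝ)
    (hna : ∀ x y : K, v (x + y) ≤ max (v x) (v y))
    (hvp : v (p : K) = 1 / (p : ℝ))
    (P : Polynomial K) (hP0 : P.coeff 0 = 0) (hPne : P ≠ 0)
    (b : ℕ → K) (hb : ∀ n, b n = PowerSeries.coeff n (pexp (P : PowerSeries K))) :
    Filter.limsup (fun n : ℕ => v (b n) ^ (1 / (n : ℝ))) Filter.atTop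
      = ⨆ n : ℕ, v (b (n + 1)) ^ (1 / ((n : ℝ) + 1)) := by
  classical
  set W : ℕ → ℝ := fun n : ℕ => v (b n) ^ (1 / (n:ℝ)) with hW
  have hbA : ∀ n, b n = PowerSeries.coeff n (pexpA K K (P : PowerSeries K)) := by
    intro n; rw [hb n, pexp_eq_pexpA]
  have hb0 : b 0 = 1 := by rw [hbA 0, coeff_zero_pexpA]
  obtain ⟨M, hM1, hM⟩ := bound_lemma (p := p) v hna hvp P b hbA
  have hbdW : ∀ n : ℕ, W n ≤ max 1 M := by
    intro n
    rcases Nat.eq_zero_or_pos n with hn | hn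
    · subst hn
      rw [hW]
      simp only [Nat.cast_zero, div_zero, Real.rpow_zero]
      exact le_max_left 1 M
    · have h1 : v (b n) ≤ M ^ n := hM n hn
      have hn0 : (n:ℝ) ≠ 0 := Nat.cast_ne_zero.2 (by omega)
      have h2 : W n ≤ (M ^ n) ^ (1/(n:ℝ)) :=
        Real.rpow_le_rpow (v.nonneg _) h1 (by positivity)
      have h3 : ((M:ℝ) ^ (n:ℕ)) ^ (1/(n:ℝ)) = M := by
        rw [← Real.rpow_natCast M n, ← Real.rpow_mul (by linarith : (0:ℝ) ≤ M),
          mul_one_div, div_self hn0, Real.rpow_one]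
      rw [h3] at h2
      exact le_trans h2 (le_max_right 1 M)
  have hbd : Filter.IsBoundedUnder (· ≤ ·) Filter.atTop W :=
    Filter.isBoundedUnder_of ⟨max 1 M, hbdW⟩
  have hkey : ∀ N : ℕ, 1 ≤ N → W N ≤ Filter.limsup W Filter.atTop :=
    fun N hN => key_lemma v hna P hP0 b hbA hb0 hbd N hN
  set L : ℝ := Filter.limsup W Filter.atTop with hL
  have hRHS : (⨆ n : ℕ, v (b (n + 1)) ^ (1 / ((n : ℝ) + 1))) = ⨆ n : ℕ, W (n+1) := by
    apply congrArg
    funext n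
    rw [hW]
    norm_num
  rw [hRHS]
  have hbdd : BddAbove (Set.range fun n : ℕ => W (n+1)) := by
    refine ⟨L, ?_⟩
    rintro x ⟨n, rfl⟩
    exact hkey (n+1) (by omega)
  apply le_antisymm
  · have hL2 : ∀ᶠ n in Filter.atTop, W n ≤ ⨆ m : ℕ, W (m+1) := by
      rw [Filter.eventually_atTop]
      refine ⟨1, fun n hn => ?_⟩
      have hn1 : n - 1 + 1 = n := by omega
      calc W n = W ((n-1)+1) := by rw [hn1]
        _ ≤ ⨆ m : ℕ, W (m+1) := le_ciSup hbdd (n-1)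
    have hcob : Filter.IsCoboundedUnder (· ≤ ·) Filter.atTop W :=
      (Filter.isBoundedUnder_of
        ⟨0, fun n => Real.rpow_nonneg (v.nonneg _) _⟩ :
          Filter.IsBoundedUnder (· ≥ ·) Filter.atTop W).isCoboundedUnder_le
    exact Filter.limsup_le_of_le hcob hL2
  · exact ciSup_le (fun n => hkey (n+1) (by omega))
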